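/- Let (Ω, μ) be a probability space, let κ, m, N, n, J be natural numbers with 1 ≤ κ ≤ m ≤ N, 1 ≤ n, 1 ≤ J, and let α ≥ 0 be a real number. Let X : Fin n → Ω → ℕ be a family of random variables that are mutually independent and each distributed as a Poisson distribution with rate α·κ (modeling the number of outliers clustered to each of the n inlier seeds), and let A : Fin J → Set Ω be mutually independent measurable events each with μ(A j) = (m choose κ)/(N choose κ) (modeling the event that one RANSAC sample of size κ drawn from N correspondences with m inliers consists only of inliers). If α ≤ U(m/N, κ, J, n), where U(p, κ, J, n) := −(1/κ)·log(1 − (1 − p^κ)^(J/n)) with J/n a real exponent, then μ(⋃ i, {ω | X i ω = 0}) ≥ μ(⋃ j, A j); that is, the probability that at least one seed's hypothetical-inlier set contains no outlier is at least the probability that at least one of the J RANSAC samples is an all-inlier subset. -/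

import Mathlib

open MeasureTheory ProbabilityTheory ENNReal

/-- The threshold `U(p, κ, J, n) = -(1/κ) · log(1 - (1 - p^κ)^(J/n))`,
where the exponent `J/n` is a real exponent. -/
noncomputable def U (p : ℝ) (κ J n : ℕ) : ℝ :=
  -(1 / (κ : ℝ)) * Real.log (1 - (1 - p ^ κ) ^ ((J : ℝ) / (n : ℝ)))

/-- The key natural-number inequality: `C(m,κ)·N^κ ≤ C(N,κ)·m^κ` when `m ≤ N`. -/
lemma choose_mul_pow_le (κ m N : ℕ) (hmN : m ≤ N) :
    m.choose κ * N ^ κ ≤ N.choose κ * m ^ κ := by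
  have hd : m.descFactorial κ * N ^ κ ≤ N.descFactorial κ * m ^ κ := by
    have hN' : N ^ κ = ∏ _i ∈ Finset.range κ, N := by simp
    have hm' : m ^ κ = ∏ _i ∈ Finset.range κ, m := by simp
    rw [Nat.descFactorial_eq_prod_range, Nat.descFactorial_eq_prod_range, hN', hm',
      ← Finset.prod_mul_distrib, ← Finset.prod_mul_distrib]
    refine Finset.prod_le_prod' ?_
    intro i _
    calc (m - i) * N = m * N - i * N := Nat.sub_mul _ _ _
      _ ≤ N * m - i * m := by
          rw [Nat.mul_comm m N]
          exact Nat.sub_le_sub_left (Nat.mul_le_mul_left i hmN) _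
      _ = (N - i) * m := (Nat.sub_mul _ _ _).symm
  rw [Nat.descFactorial_eq_factorial_mul_choose, Nat.descFactorial_eq_factorial_mul_choose,
    Nat.mul_assoc, Nat.mul_assoc] at hd
  exact Nat.le_of_mul_le_mul_left hd (Nat.factorial_pos κ)

/-- **Theorem 1.** Let `1 ≤ κ ≤ m ≤ N`, `1 ≤ n`, `1 ≤ J` and `α ≥ 0`. Let
`X : Fin n → Ω → ℕ` be mutually independent random variables, each
Poisson-distributed with rate `α·κ` (the number of outliers clustered to each
inlier seed), and let `A : Fin J → Set Ω` be mutually independent events, each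
of probability `C(m,κ)/C(N,κ)` (the event that one RANSAC sample of size `κ`
from `N` correspondences with `m` inliers is all-inlier). If
`α ≤ U(m/N, κ, J, n)`, then the probability that at least one seed's
hypothetical-inlier set contains no outlier is at least the probability that at
least one of the `J` RANSAC samples is an all-inlier subset. -/
theorem voting_beats_ransac {Ω : Type*} [MeasurableSpace Ω] (μ : Measure Ω)
    [IsProbabilityMeasure μ] (κ m N n J : ℕ)
    (hκ : 1 ≤ κ) (hκm : κ ≤ m) (hmN : m ≤ N) (hn : 1 ≤ n) (hJ : 1 ≤ J)
    (α : ℝ) (hα0 : 0 ≤ α)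
    (X : Fin n → Ω → ℕ) (hXmeas : ∀ i, Measurable (X i))
    (hXindep : iIndepFun X μ)
    (hXdist : ∀ i, Measure.map (X i) μ = poissonMeasure (α * κ).toNNReal)
    (A : Fin J → Set Ω) (hAmeas : ∀ j, MeasurableSet (A j))
    (hAindep : iIndepSet A μ)
    (hAprob : ∀ j, μ (A j) = (m.choose κ : ℝ≥0∞) / (N.choose κ : ℝ≥0∞))
    (hαU : α ≤ U ((m : ℝ) / (N : ℝ)) κ J n) :
    μ (⋃ j, A j) ≤ μ (⋃ i, {ω | X i ω = 0}) := by
  have hκN : κ ≤ N := le_trans hκm hmN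
  have hm1 : 1 ≤ m := le_trans hκ hκm
  have hN1 : 1 ≤ N := le_trans hm1 hmN
  have hNpos : (0 : ℝ) < N := by exact_mod_cast hN1
  have hmpos : (0 : ℝ) < m := by exact_mod_cast hm1
  set p : ℝ := (m : ℝ) / (N : ℝ) with hp
  have hp_pos : 0 < p := div_pos hmpos hNpos
  have hp_le : p ≤ 1 := (div_le_one hNpos).mpr (by exact_mod_cast hmN)
  have hpκ_pos : 0 < p ^ κ := pow_pos hp_pos κ
  have hpκ_le : p ^ κ ≤ 1 := pow_le_one₀ hp_pos.le hp_le
  -- the real quantity `c = (1 - p^κ)^(J/n)`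
  set c : ℝ := (1 - p ^ κ) ^ ((J : ℝ) / (n : ℝ)) with hc
  have hbase0 : (0 : ℝ) ≤ 1 - p ^ κ := by linarith
  have hc0 : 0 ≤ c := Real.rpow_nonneg hbase0 _
  have hJn_pos : (0 : ℝ) < (J : ℝ) / (n : ℝ) := by
    apply div_pos <;> [exact_mod_cast hJ; exact_mod_cast hn]
  have hc1 : c < 1 := Real.rpow_lt_one hbase0 (by linarith) hJn_pos
  have hκR : (0 : ℝ) < (κ : ℝ) := by exact_mod_cast hκ
  -- key real inequality: `1 - exp(-(α·κ)) ≤ c`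
  have hkey : 1 - Real.exp (-(α * κ)) ≤ c := by
    have h1 : α * κ ≤ -Real.log (1 - c) := by
      calc α * κ ≤ U p κ J n * κ := by
            exact mul_le_mul_of_nonneg_right hαU hκR.le
        _ = -Real.log (1 - c) := by
            simp only [U, ← hc]
            field_simp
    have h2 : Real.log (1 - c) ≤ -(α * κ) := by linarith
    have h3 : 1 - c ≤ Real.exp (-(α * κ)) := by
      calc 1 - c = Real.exp (Real.log (1 - c)) := (Real.exp_log (by linarith)).symm
        _ ≤ Real.exp (-(α * κ)) := Real.exp_le_exp.mpr h2
    linarith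
  have hexp_nonneg : (0 : ℝ) ≤ Real.exp (-(α * κ)) := (Real.exp_pos _).le
  have hexp_le_one : Real.exp (-(α * κ)) ≤ 1 := by
    rw [← Real.exp_zero]
    apply Real.exp_le_exp.mpr
    have : (0 : ℝ) ≤ α * κ := by positivity
    linarith
  -- real inequality between the two complement probabilities
  have hrealkey : (1 - Real.exp (-(α * κ))) ^ n ≤ (1 - p ^ κ) ^ J := by
    have hnn : ((n : ℝ)) ≠ 0 := by positivity
    calc (1 - Real.exp (-(α * κ))) ^ n ≤ c ^ n :=
          pow_le_pow_left₀ (by linarith) hkey n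
      _ = (1 - p ^ κ) ^ J := by
          rw [← Real.rpow_natCast c n, hc, ← Real.rpow_mul hbase0,
            div_mul_cancel₀ _ hnn, Real.rpow_natCast]
  -- `q = C(m,κ)/C(N,κ) ≤ p^κ` over the reals
  have hcNpos : (0 : ℝ) < (N.choose κ : ℝ) := by exact_mod_cast Nat.choose_pos hκN
  have hqr : (m.choose κ : ℝ) / (N.choose κ : ℝ) ≤ p ^ κ := by
    rw [div_le_iff₀ hcNpos, hp, div_pow, div_mul_eq_mul_div, le_div_iff₀ (pow_pos hNpos κ)]
    have := choose_mul_pow_le κ m N hmN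
    have hcast : (m.choose κ : ℝ) * (N : ℝ) ^ κ ≤ (N.choose κ : ℝ) * (m : ℝ) ^ κ := by
      exact_mod_cast this
    linarith [hcast]
  -- ENNReal versions
  set q : ℝ≥0∞ := (m.choose κ : ℝ≥0∞) / (N.choose κ : ℝ≥0∞) with hq
  have hqofReal : q = ENNReal.ofReal ((m.choose κ : ℝ) / (N.choose κ : ℝ)) := by
    rw [ENNReal.ofReal_div_of_pos hcNpos, ENNReal.ofReal_natCast, ENNReal.ofReal_natCast]
  have hq_le : q ≤ ENNReal.ofReal (p ^ κ) := by
    rw [hqofReal]; exact ENNReal.ofReal_le_ofReal hqr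
  -- probability that one Poisson variable is zero
  have hrt : ((α * κ).toNNReal : ℝ) = α * κ := Real.coe_toNNReal _ (by positivity)
  have hX0 : ∀ i, μ (X i ⁻¹' {0}) = ENNReal.ofReal (Real.exp (-(α * κ))) := by
    intro i
    rw [← Measure.map_apply (hXmeas i) (measurableSet_singleton 0), hXdist i,
      poissonMeasure_singleton]
    simp [hrt]
  -- measure of the intersection of complements, for `X`
  have hXinter : μ (⋂ i, (X i ⁻¹' {0})ᶜ) =
      (1 - ENNReal.ofReal (Real.exp (-(α * κ)))) ^ n := by
    have := hXindep.meas_iInter (s := fun i => (X i ⁻¹' {0})ᶜ)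
      (fun i => ⟨({0} : Set ℕ)ᶜ, (measurableSet_singleton 0).compl, by
        rw [Set.preimage_compl]⟩)
    rw [this]
    have : ∀ i, μ ((X i ⁻¹' {0})ᶜ) = 1 - ENNReal.ofReal (Real.exp (-(α * κ))) := by
      intro i
      rw [prob_compl_eq_one_sub ((hXmeas i) (measurableSet_singleton 0)), hX0 i]
    simp [this]
  -- measure of the intersection of complements, for `A`
  have hAinter : μ (⋂ j, (A j)ᶜ) = (1 - q) ^ J := by
    have := ((iIndepSet_iff_iIndep A μ).1 hAindep).meas_iInter (s := fun j => (A j)ᶜ)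
      (fun j => (MeasurableSpace.measurableSet_generateFrom (Set.mem_singleton _)).compl)
    rw [this]
    have : ∀ j, μ ((A j)ᶜ) = 1 - q := by
      intro j
      rw [prob_compl_eq_one_sub (hAmeas j), hAprob j]
    simp [this]
  -- rewrite both union probabilities
  have hAunion : μ (⋃ j, A j) = 1 - (1 - q) ^ J := by
    have h := prob_compl_eq_one_sub (μ := μ) (MeasurableSet.iUnion hAmeas)
    rw [Set.compl_iUnion, hAinter] at h
    rw [h, ENNReal.sub_sub_cancel one_ne_top prob_le_one]
  have hXunion : μ (⋃ i, {ω | X i ω = 0}) =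
      1 - (1 - ENNReal.ofReal (Real.exp (-(α * κ)))) ^ n := by
    have hset : ∀ i, {ω | X i ω = 0} = X i ⁻¹' {0} := fun i => rfl
    have h := prob_compl_eq_one_sub (μ := μ)
      (MeasurableSet.iUnion (fun i => (hXmeas i) (measurableSet_singleton 0)))
    rw [Set.compl_iUnion, hXinter] at h
    simp only [hset]
    rw [h, ENNReal.sub_sub_cancel one_ne_top prob_le_one]
  rw [hAunion, hXunion]
  apply tsub_le_tsub_left
  calc (1 - ENNReal.ofReal (Real.exp (-(α * κ)))) ^ n
      = ENNReal.ofReal ((1 - Real.exp (-(α * κ))) ^ n) := by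
        rw [ENNReal.ofReal_pow (by linarith), ENNReal.ofReal_sub _ hexp_nonneg,
          ENNReal.ofReal_one]
    _ ≤ ENNReal.ofReal ((1 - p ^ κ) ^ J) := ENNReal.ofReal_le_ofReal hrealkey
    _ = (1 - ENNReal.ofReal (p ^ κ)) ^ J := by
        rw [ENNReal.ofReal_pow hbase0, ENNReal.ofReal_sub _ hpκ_pos.le, ENNReal.ofReal_one]
    _ ≤ (1 - q) ^ J := pow_le_pow_left₀ (zero_le (a := _)) (tsub_le_tsub_left hq_le 1) J
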